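/- Let p ≥ 3 be a prime, k ≥ 1 a natural number, l ≥ 1 an odd natural number, and let n = φ(p^k)·l/2. If m is a natural number with 2 ≤ m and 2m < p^k − 1, and b is a natural number whose remainder r modulo p^k satisfies m + 1 ≤ r ≤ p^k − m − 1, then the equation x_1^n + ⋯ + x_m^n = b has no solution in nonnegative integers. -/

import Mathlib

theorem aux_sq_eq_one (p k : ℕ) (hp : p.Prime) (hp3 : 3 ≤ p) (hk : 1 ≤ k) (v : ZMod (p^k))
    (hv : v ^ 2 = 1) : v = 1 ∨ v = -1 := by
  haveI : NeZero (p^k) := ⟨by positivity⟩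
  have hvv : ((v.val : ℤ) : ZMod (p^k)) = v := by
    push_cast; rw [ZMod.natCast_val, ZMod.cast_id]
  have hdvd : ((p^k : ℕ) : ℤ) ∣ ((v.val : ℤ) - 1) * ((v.val : ℤ) + 1) := by
    rw [← ZMod.intCast_zmod_eq_zero_iff_dvd]
    push_cast
    rw [ZMod.natCast_val, ZMod.cast_id]
    linear_combination hv
  have hdvd' : (p:ℤ)^k ∣ ((v.val : ℤ) - 1) * ((v.val : ℤ) + 1) := by exact_mod_cast hdvd
  have hprime : Prime (p : ℤ) := Nat.prime_iff_prime_int.mp hp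
  have hnot : ¬ ((p:ℤ) ∣ (v.val : ℤ) - 1 ∧ (p:ℤ) ∣ (v.val : ℤ) + 1) := by
    rintro ⟨h1, h2⟩
    have h3 : (p:ℤ) ∣ 2 := by
      have := dvd_sub h2 h1; simpa using this
    have := Int.le_of_dvd (by norm_num) h3
    omega
  rcases hprime.dvd_or_dvd (dvd_trans (dvd_pow_self (p:ℤ) (by omega : k ≠ 0)) hdvd') with h1 | h2
  · left
    have hcop : IsCoprime ((p:ℤ)^k) ((v.val:ℤ) + 1) := by
      apply IsCoprime.pow_left
      rw [hprime.coprime_iff_not_dvd]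
      intro h; exact hnot ⟨h1, h⟩
    have hd : ((p:ℤ)^k) ∣ (v.val : ℤ) - 1 := hcop.dvd_of_dvd_mul_right hdvd'
    have h0 : (((v.val : ℤ) - 1 : ℤ) : ZMod (p^k)) = 0 := by
      rw [ZMod.intCast_zmod_eq_zero_iff_dvd]; exact_mod_cast hd
    push_cast at h0
    rw [ZMod.natCast_val, ZMod.cast_id, sub_eq_zero] at h0
    exact h0
  · right
    have hcop : IsCoprime ((p:ℤ)^k) ((v.val:ℤ) - 1) := by
      apply IsCoprime.pow_left
      rw [hprime.coprime_iff_not_dvd]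
      intro h; exact hnot ⟨h, h2⟩
    have hd : ((p:ℤ)^k) ∣ (v.val : ℤ) + 1 := hcop.dvd_of_dvd_mul_left hdvd'
    have h0 : (((v.val : ℤ) + 1 : ℤ) : ZMod (p^k)) = 0 := by
      rw [ZMod.intCast_zmod_eq_zero_iff_dvd]; exact_mod_cast hd
    push_cast at h0
    rw [ZMod.natCast_val, ZMod.cast_id] at h0
    exact eq_neg_of_add_eq_zero_left h0

/-- If `p ≥ 3` is prime, `k ≥ 1`, `l ≥ 1` is odd, `n = φ(p^k)·l/2`, `2 ≤ m`,
`2m < p^k - 1` and the remainder `r` of `b` modulo `p^k` satisfies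
`m + 1 ≤ r ≤ p^k - m - 1`, then `x₁^n + ⋯ + x_m^n = b` has no solution in nonnegative
integers. -/
theorem stmt_13 (p k l m b : ℕ) (hp : p.Prime) (hp3 : 3 ≤ p) (hk : 1 ≤ k) (hl : 1 ≤ l)
    (hlodd : Odd l) (n : ℕ) (hn : n = Nat.totient (p ^ k) * l / 2)
    (hm : 2 ≤ m) (hm2 : 2 * m < p ^ k - 1) (hb : 1 ≤ b)
    (hr1 : m + 1 ≤ b % p ^ k) (hr2 : b % p ^ k ≤ p ^ k - m - 1) :
    ¬ ∃ x : Fin m → ℕ, ∑ i, x i ^ n = b := by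
  haveI : NeZero (p ^ k) := ⟨by positivity⟩
  obtain ⟨c, hc⟩ : Odd p := hp.odd_of_ne_two (by omega)
  have hc1 : 1 ≤ c := by omega
  have htot : (p ^ k).totient = p ^ (k - 1) * (p - 1) := Nat.totient_prime_pow hp hk
  have hφ : (p ^ k).totient = (p ^ (k - 1) * c) * 2 := by
    rw [htot, show p - 1 = 2 * c by omega]; ring
  have hn' : n = (p ^ (k - 1) * c) * l := by
    rw [hn, hφ, show p ^ (k - 1) * c * 2 * l = 2 * (p ^ (k - 1) * c * l) by ring,
      Nat.mul_div_cancel_left _ (by norm_num)]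
  have hkn : k ≤ n := by
    have h1 : k ≤ 2 ^ (k - 1) := by
      have := Nat.lt_two_pow_self (n := k - 1); omega
    have h2 : 2 ^ (k - 1) ≤ p ^ (k - 1) := Nat.pow_le_pow_left (by omega) _
    calc k ≤ p ^ (k - 1) := h1.trans h2
      _ = p ^ (k - 1) * 1 * 1 := by ring
      _ ≤ (p ^ (k - 1) * c) * l := Nat.mul_le_mul (Nat.mul_le_mul_left _ hc1) hl
      _ = n := hn'.symm
  have key : ∀ x : ℕ, ∃ e : ℤ, (-1 ≤ e ∧ e ≤ 1) ∧
      ((x : ZMod (p ^ k))) ^ n = (e : ZMod (p ^ k)) := by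
    intro x
    by_cases hpx : p ∣ x
    · refine ⟨0, by norm_num, ?_⟩
      have hdvd : p ^ k ∣ x ^ n := dvd_trans (pow_dvd_pow p hkn) (pow_dvd_pow_of_dvd hpx n)
      have h0 : ((x ^ n : ℕ) : ZMod (p ^ k)) = 0 :=
        (ZMod.natCast_eq_zero_iff _ _).mpr hdvd
      push_cast at h0
      simpa using h0
    · have hcop : x.Coprime (p ^ k) :=
        Nat.Coprime.pow_right k (Nat.coprime_comm.mp ((hp.coprime_iff_not_dvd).mpr hpx))
      have heuler : ((x ^ (p ^ k).totient : ℕ) : ZMod (p ^ k)) = ((1 : ℕ) : ZMod (p ^ k)) :=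
        (ZMod.natCast_eq_natCast_iff _ _ _).mpr (Nat.ModEq.pow_totient hcop)
      push_cast at heuler
      have hv2 : ((x : ZMod (p ^ k)) ^ (p ^ (k - 1) * c)) ^ 2 = 1 := by
        rw [← pow_mul, ← hφ]; exact heuler
      have hxn : (x : ZMod (p ^ k)) ^ n = ((x : ZMod (p ^ k)) ^ (p ^ (k - 1) * c)) ^ l := by
        rw [← pow_mul, hn']
      rcases aux_sq_eq_one p k hp hp3 hk _ hv2 with h | h
      · exact ⟨1, by norm_num, by rw [hxn, h, one_pow]; norm_num⟩
      · exact ⟨-1, by norm_num, by rw [hxn, h, hlodd.neg_one_pow]; push_cast; ring⟩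
  rintro ⟨x, hx⟩
  choose e hbound heq using fun i => key (x i)
  set S : ℤ := ∑ i, e i with hS
  have hS1 : S ≤ (m : ℤ) := by
    calc S ≤ ∑ _i : Fin m, (1 : ℤ) := Finset.sum_le_sum fun i _ => (hbound i).2
      _ = m := by simp
  have hS2 : -(m : ℤ) ≤ S := by
    calc -(m : ℤ) = ∑ _i : Fin m, (-1 : ℤ) := by simp
      _ ≤ S := Finset.sum_le_sum fun i _ => (hbound i).1
  have hcast : ((b : ℤ) : ZMod (p ^ k)) = (S : ZMod (p ^ k)) := by
    have : ((b : ℕ) : ZMod (p ^ k)) = ∑ i, ((x i : ZMod (p ^ k))) ^ n := by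
      rw [← hx]; push_cast; rfl
    push_cast
    rw [this, hS]
    push_cast
    exact Finset.sum_congr rfl fun i _ => heq i
  have hdvd : ((p ^ k : ℕ) : ℤ) ∣ (b : ℤ) - S := by
    rw [← ZMod.intCast_zmod_eq_zero_iff_dvd]
    push_cast
    push_cast at hcast
    rw [hcast]; ring
  obtain ⟨q, hq⟩ := hdvd
  have hNb : (b : ℤ) = (p ^ k : ℕ) * ((b / p ^ k : ℕ) : ℤ) + ((b % p ^ k : ℕ) : ℤ) := by
    exact_mod_cast congrArg (Nat.cast : ℕ → ℤ) (Nat.div_add_mod b (p ^ k)).symm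
  have hN2 : 2 * m + 2 ≤ p ^ k := by omega
  have hr1' : (m : ℤ) + 1 ≤ ((b % p ^ k : ℕ) : ℤ) := by exact_mod_cast hr1
  have hr2' : ((b % p ^ k : ℕ) : ℤ) ≤ ((p ^ k : ℕ) : ℤ) - m - 1 := by
    have h := hr2; omega
  set N : ℤ := ((p ^ k : ℕ) : ℤ) with hNdef
  have hNpos : 0 < N := by positivity
  have ht : N * (((b / p ^ k : ℕ) : ℤ) - q) = S - ((b % p ^ k : ℕ) : ℤ) := by
    linear_combination hq - hNb
  set t : ℤ := ((b / p ^ k : ℕ) : ℤ) - q with htdef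
  rcases le_or_gt 0 t with h0 | h0
  · have : 0 ≤ N * t := mul_nonneg hNpos.le h0
    omega
  · have h1 : t ≤ -1 := by omega
    have : N * t ≤ N * (-1) := mul_le_mul_of_nonneg_left h1 hNpos.le
    omega
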